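/- Let δ ∈ (0,1) and consider F_δ(a,b,c,d) = ((1+δ)/2)(H₂(a+b)+H₂(a+c)) − H(a,b,c,d) − (a+d) log₂ δ + log₂(1+δ) − δ on the simplex {a,b,c,d ≥ 0, a+b+c+d=1}. At a boundary point of the form (a,b,0,0) with a,b > 0, a+b=1, the perturbation (a−Δ, b, 0, Δ) changes the value of F_δ by ((δ−1)/2 + o(1)) Δ log₂(1/Δ) as Δ → 0⁺; in particular F_δ(a−Δ, b, 0, Δ) < F_δ(a,b,0,0) for all sufficiently small Δ > 0. -/
import Mathlib

open Real Filter

/-- One term of base-2 Shannon entropy, with the convention `0 · log 0 = 0`. -/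
noncomputable def ent (p : ℝ) : ℝ := -(p * Real.logb 2 p)

/-- Binary entropy, base 2. -/
noncomputable def H₂ (p : ℝ) : ℝ := ent p + ent (1 - p)

/-- The functional `F_δ` of the paper. -/
noncomputable def Fδ (δ a b c d : ℝ) : ℝ :=
  ((1+δ)/2) * (H₂ (a+b) + H₂ (a+c)) - (ent a + ent b + ent c + ent d)
    - (a+d) * Real.logb 2 δ + Real.logb 2 (1+δ) - δ

lemma ent_differentiableAt {p : ℝ} (hp : p ≠ 0) : DifferentiableAt ℝ ent p := by
  have : ent = fun p => -(p * (Real.log p / Real.log 2)) := by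
    funext q; simp [ent, Real.logb]
  rw [this]
  exact (differentiableAt_id.mul ((Real.differentiableAt_log hp).div_const _)).neg

lemma ent_eq (Δ : ℝ) : ent Δ = Δ * Real.logb 2 (1/Δ) := by
  rw [one_div, Real.logb_inv, ent]; ring

/-- At a boundary point `(a,b,0,0)` the perturbation `(a−Δ, b, 0, Δ)` changes `F_δ` by
`((δ−1)/2 + o(1)) Δ log₂(1/Δ)`; in particular it strictly decreases `F_δ` for small `Δ > 0`. -/
theorem boundary_not_min (δ a b : ℝ) (hδ : δ ∈ Set.Ioo (0:ℝ) 1)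
    (ha : 0 < a) (hb : 0 < b) (hab : a + b = 1) :
    (∃ e : ℝ → ℝ, Tendsto e (nhdsWithin 0 (Set.Ioi 0)) (nhds 0) ∧
      ∀ᶠ Δ in nhdsWithin 0 (Set.Ioi (0:ℝ)),
        Fδ δ (a-Δ) b 0 Δ - Fδ δ a b 0 0 = ((δ-1)/2 + e Δ) * (Δ * Real.logb 2 (1/Δ))) ∧
    ∀ᶠ Δ in nhdsWithin 0 (Set.Ioi (0:ℝ)), Fδ δ (a-Δ) b 0 Δ < Fδ δ a b 0 0 := by
  obtain ⟨hδ0, hδ1⟩ := hδ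
  set R : ℝ → ℝ := fun Δ =>
    ((1+δ)/2) * (ent (1-Δ) + ent (a-Δ) + ent (b+Δ) - ent a - ent b)
      + (ent a - ent (a-Δ)) with hR
  -- key algebraic identity
  have key : ∀ Δ : ℝ, Fδ δ (a-Δ) b 0 Δ - Fδ δ a b 0 0 = ((δ-1)/2) * ent Δ + R Δ := by
    intro Δ
    have h1 : a - Δ + b = 1 - Δ := by linarith
    have h2 : (1:ℝ) - (a - Δ) = b + Δ := by linarith
    have h3 : (1:ℝ) - a = b := by linarith
    have e1 : ent 1 = 0 := by simp [ent]
    have e0 : ent 0 = 0 := by simp [ent]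
    simp only [Fδ, H₂, hR, hab, h1, h2, h3, add_zero, sub_self, e1, e0]
    ring_nf
  have hR0 : R 0 = 0 := by simp [hR, ent]
  -- differentiability of R at 0
  have hdiff : DifferentiableAt ℝ R 0 := by
    have d1 : DifferentiableAt ℝ (fun Δ : ℝ => ent (1-Δ)) 0 :=
      (ent_differentiableAt (by norm_num : (1:ℝ) - 0 ≠ 0)).comp 0
        ((differentiableAt_const 1).sub differentiableAt_id)
    have d2 : DifferentiableAt ℝ (fun Δ : ℝ => ent (a-Δ)) 0 :=
      (ent_differentiableAt (by simpa using ha.ne' : a - 0 ≠ 0)).comp 0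
        ((differentiableAt_const a).sub differentiableAt_id)
    have d3 : DifferentiableAt ℝ (fun Δ : ℝ => ent (b+Δ)) 0 :=
      (ent_differentiableAt (by simpa using hb.ne' : b + 0 ≠ 0)).comp 0
        ((differentiableAt_const b).add differentiableAt_id)
    exact (((((d1.add d2).add d3).sub (differentiableAt_const _)).sub
      (differentiableAt_const _)).const_mul _).add
      ((differentiableAt_const _).sub d2)
  set r : ℝ := deriv R 0 with hr
  have hslope : Tendsto (fun Δ => R Δ / Δ) (nhdsWithin 0 (Set.Ioi 0)) (nhds r) := by
    have h := hasDerivAt_iff_tendsto_slope.1 hdiff.hasDerivAt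
    have h' : Tendsto (slope R 0) (nhdsWithin 0 (Set.Ioi 0)) (nhds r) :=
      h.mono_left (nhdsWithin_mono 0 (fun x hx => ne_of_gt hx))
    refine h'.congr (fun Δ => ?_)
    rw [slope_def_field, hR0]
    ring_nf
  have hLinv : Tendsto (fun Δ : ℝ => (Real.logb 2 (1/Δ))⁻¹)
      (nhdsWithin 0 (Set.Ioi 0)) (nhds 0) := by
    have h1 : Tendsto (fun Δ : ℝ => Real.logb 2 (1/Δ)) (nhdsWithin 0 (Set.Ioi 0)) atTop := by
      have := (Real.tendsto_logb_atTop (by norm_num : (1:ℝ) < 2)).comp tendsto_inv_nhdsGT_zero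
      simpa only [Function.comp_def, one_div] using this
    exact h1.inv_tendsto_atTop
  set e : ℝ → ℝ := fun Δ => (R Δ / Δ) * (Real.logb 2 (1/Δ))⁻¹ with he
  have hetends : Tendsto e (nhdsWithin 0 (Set.Ioi 0)) (nhds 0) := by
    have := hslope.mul hLinv
    simpa only [mul_zero] using this
  have hmem : Set.Ioo (0:ℝ) 1 ∈ nhdsWithin (0:ℝ) (Set.Ioi 0) :=
    mem_nhdsWithin.2 ⟨Set.Iio 1, isOpen_Iio, by norm_num, fun x hx => ⟨hx.2, hx.1⟩⟩
  have heq : ∀ᶠ Δ in nhdsWithin 0 (Set.Ioi (0:ℝ)),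
      Fδ δ (a-Δ) b 0 Δ - Fδ δ a b 0 0 = ((δ-1)/2 + e Δ) * (Δ * Real.logb 2 (1/Δ)) := by
    filter_upwards [hmem] with Δ hΔ
    obtain ⟨hΔ0, hΔ1⟩ := hΔ
    have hL : 0 < Real.logb 2 (1/Δ) :=
      Real.logb_pos (by norm_num) (by rw [one_div]; exact (one_lt_inv₀ hΔ0).mpr hΔ1)
    have hcl : e Δ * (Δ * Real.logb 2 (1/Δ)) = R Δ := by
      show (R Δ / Δ) * (Real.logb 2 (1/Δ))⁻¹ * (Δ * Real.logb 2 (1/Δ)) = R Δ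
      field_simp
    rw [key, ent_eq, add_mul, hcl]
  refine ⟨⟨e, hetends, heq⟩, ?_⟩
  have hsmall : ∀ᶠ Δ in nhdsWithin 0 (Set.Ioi (0:ℝ)), |e Δ| < (1-δ)/4 := by
    have hpos : (0:ℝ) < (1-δ)/4 := by linarith
    have := hetends.eventually (eventually_abs_sub_lt 0 hpos)
    exact this.mono (fun x hx => by simpa using hx)
  filter_upwards [heq, hsmall, hmem] with Δ h1 h2 hΔ
  obtain ⟨hΔ0, hΔ1⟩ := hΔ
  have hL : 0 < Real.logb 2 (1/Δ) :=
    Real.logb_pos (by norm_num) (by rw [one_div]; exact (one_lt_inv₀ hΔ0).mpr hΔ1)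
  have hcoef : (δ-1)/2 + e Δ < 0 := by
    have := abs_lt.1 h2
    linarith [this.2]
  have hneg : Fδ δ (a-Δ) b 0 Δ - Fδ δ a b 0 0 < 0 := by
    rw [h1]
    exact mul_neg_of_neg_of_pos hcoef (mul_pos hΔ0 hL)
  linarith
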